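/- arXiv:2601.22721 — 2 statements merged into one kernel-verified Lean document; each statement's English description precedes it below -/
import Mathlib

section
/- Comma squares in Cat are exact: for functors f : B → D and g : A → D, writing (f ↓ g) for the comma category with projections dom : (f↓g) → B and cod : (f↓g) → A, the canonical comparison between the composite profunctors dom_⋄ ∘ cod° and f° ∘ g_⋄ (both profunctors from A to B) is an isomorphism; concretely, for all a ∈ A, b ∈ B the canonical map colim over the comma data computing (dom_⋄ ∘ cod°)(b,a) → D(f(b), g(a)) is bijective. -/
open CategoryTheory

/-- Data computing the coend `(dom_⋄ ∘ cod°)(b, a) = ∫^{e ∈ (f↓g)} B(b, dom e) × A(cod e, a)`. -/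
def commaEval {B A D : Type*} [Category B] [Category A] [Category D]
    (f : B ⥤ D) (g : A ⥤ D) (b : B) (a : A)
    (p : Σ e : Comma f g, (b ⟶ e.left) × (e.right ⟶ a)) : f.obj b ⟶ g.obj a :=
  f.map p.2.1 ≫ p.1.hom ≫ g.map p.2.2

/-- The coend relation identifying data along morphisms of the comma category. -/
def commaRel {B A D : Type*} [Category B] [Category A] [Category D]
    (f : B ⥤ D) (g : A ⥤ D) (b : B) (a : A)
    (p q : Σ e : Comma f g, (b ⟶ e.left) × (e.right ⟶ a)) : Prop :=
  ∃ m : p.1 ⟶ q.1, p.2.1 ≫ m.left = q.2.1 ∧ p.2.2 = m.right ≫ q.2.2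

/-- Comma squares in `Cat` are exact: the canonical comparison from the coend
`(dom_⋄ ∘ cod°)(b, a)` to `D(f b, g a)` is well defined and bijective, i.e. the
evaluation is invariant under the coend relation, surjective, and any two data
with equal evaluation are connected by a zig-zag. -/
theorem stmt_10 {B A D : Type*} [Category B] [Category A] [Category D]
    (f : B ⥤ D) (g : A ⥤ D) (b : B) (a : A) :
    (∀ p q, commaRel f g b a p q → commaEval f g b a p = commaEval f g b a q) ∧
      Function.Surjective (commaEval f g b a) ∧
      (∀ p q, commaEval f g b a p = commaEval f g b a q →
        Relation.EqvGen (commaRel f g b a) p q) := by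
  refine ⟨?_, ?_, ?_⟩
  · rintro ⟨e, u, v⟩ ⟨e', u', v'⟩ ⟨m, h1, h2⟩
    have w := m.w
    simp only [commaEval] at *
    rw [← h1, h2, Functor.map_comp, Functor.map_comp]
    simp only [Category.assoc]
    congr 1
    rw [← Category.assoc, ← Category.assoc, w]
  · intro φ
    exact ⟨⟨⟨b, a, φ⟩, 𝟙 b, 𝟙 a⟩, by simp [commaEval]⟩
  · -- key: every p is connected to the canonical ⟨⟨b,a,eval p⟩, 𝟙, 𝟙⟩
    have key : ∀ p : Σ e : Comma f g, (b ⟶ e.left) × (e.right ⟶ a),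
        Relation.EqvGen (commaRel f g b a) p
          ⟨⟨b, a, commaEval f g b a p⟩, 𝟙 b, 𝟙 a⟩ := by
      rintro ⟨e, u, v⟩
      set p' : Σ e : Comma f g, (b ⟶ e.left) × (e.right ⟶ a) :=
        ⟨⟨b, e.right, f.map u ≫ e.hom⟩, 𝟙 b, v⟩ with hp'
      have r1 : commaRel f g b a p' ⟨e, u, v⟩ :=
        ⟨{ left := u, right := 𝟙 _, w := by simp [p'] }, by simp [p'], by simp [p']⟩
      have r2 : commaRel f g b a p'
          ⟨⟨b, a, commaEval f g b a (⟨e, u, v⟩ : Σ e : Comma f g, (b ⟶ e.left) × (e.right ⟶ a))⟩, 𝟙 b, 𝟙 a⟩ :=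
        ⟨{ left := 𝟙 b, right := v, w := by simp [commaEval, p'] }, by simp [p'], by simp [p']⟩
      exact .trans _ _ _ (.symm _ _ (.rel _ _ r1)) (.rel _ _ r2)
    intro p q h
    refine .trans _ _ _ (key p) ?_
    rw [h]
    exact .symm _ _ (key q)
end

section
/- In Cat, a square of functors with a natural transformation τ : x∘u ⇒ y∘v is exact if and only if for every b ∈ B, c ∈ C, every arrow ρ : x(b) → y(c) in D factors as ρ = y(φ) ∘ τ_a ∘ x(ψ) for some a ∈ A, ψ : b → u(a), φ : v(a) → c, and moreover any two such factorizations are connected by a zig-zag in the appropriate category of factorizations; in particular, for a comma square this holds, giving: every arrow x(b) → y(c) factors essentially uniquely through the comma object of x and y. -/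
open CategoryTheory

section
universe v₁ v₂ v₃ v₄ u₁ u₂ u₃ u₄
variable {A : Type u₁} {B : Type u₂} {C : Type u₃} {D : Type u₄}
  [Category.{v₁} A] [Category.{v₂} B] [Category.{v₃} C] [Category.{v₄} D]

/-- Zig-zag relation on the category of factorizations of arrows through a
square `τ : x ∘ u ⟶ y ∘ v`. -/
def factRel (u : A ⥤ B) (v : A ⥤ C) (b : B) (c : C)
    (p q : Σ a : A, (b ⟶ u.obj a) × (v.obj a ⟶ c)) : Prop :=
  ∃ m : p.1 ⟶ q.1, p.2.1 ≫ u.map m = q.2.1 ∧ p.2.2 = v.map m ≫ q.2.2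

/-- Evaluation of factorization data: `(a, ψ, φ) ↦ y(φ) ∘ τ_a ∘ x(ψ)`. -/
def factEval (u : A ⥤ B) (v : A ⥤ C) (x : B ⥤ D) (y : C ⥤ D)
    (τ : u ⋙ x ⟶ v ⋙ y) {b : B} {c : C}
    (p : Σ a : A, (b ⟶ u.obj a) × (v.obj a ⟶ c)) : x.obj b ⟶ y.obj c :=
  x.map p.2.1 ≫ τ.app p.1 ≫ y.map p.2.2

lemma factEval_rel (u : A ⥤ B) (v : A ⥤ C) (x : B ⥤ D) (y : C ⥤ D)
    (τ : u ⋙ x ⟶ v ⋙ y) {b : B} {c : C}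
    (p q : Σ a : A, (b ⟶ u.obj a) × (v.obj a ⟶ c)) (h : factRel u v b c p q) :
    factEval u v x y τ p = factEval u v x y τ q := by
  obtain ⟨m, h1, h2⟩ := h
  have hnat := τ.naturality m
  simp only [Functor.comp_map] at hnat
  simp only [factEval, ← h1, h2, Functor.map_comp, Category.assoc]
  rw [← reassoc_of% hnat]

/-- Exactness of a square `τ : x ∘ u ⟶ y ∘ v` in `Cat`: for all `b`, `c`, the
canonical map from the colimit (the quotient of factorization data by the
zig-zag relation) to `D(x b, y c)` is bijective. -/
def IsExactSq (u : A ⥤ B) (v : A ⥤ C) (x : B ⥤ D) (y : C ⥤ D)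
    (τ : u ⋙ x ⟶ v ⋙ y) : Prop :=
  ∀ (b : B) (c : C),
    Function.Bijective
      ((Quot.lift (factEval u v x y τ) (fun p q h => factEval_rel u v x y τ p q h)) :
        Quot (factRel u v b c) → (x.obj b ⟶ y.obj c))

end

/-- A square of functors with `τ : x ∘ u ⟶ y ∘ v` is exact iff every arrow
`ρ : x b ⟶ y c` factors as `y φ ≫ τ_a ≫ x ψ` and any two factorizations of
the same arrow are connected by a zig-zag; in particular, comma squares are
exact. -/
theorem stmt_14 :
    (∀ {A B C D : Type u} [Category.{v} A] [Category.{v} B] [Category.{v} C]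
        [Category.{v} D] (u : A ⥤ B) (v : A ⥤ C) (x : B ⥤ D) (y : C ⥤ D)
        (τ : u ⋙ x ⟶ v ⋙ y),
        IsExactSq u v x y τ ↔
          ((∀ (b : B) (c : C) (ρ : x.obj b ⟶ y.obj c),
              ∃ p, factEval u v x y τ p = ρ) ∧
            (∀ (b : B) (c : C) p q, factEval u v x y τ (b := b) (c := c) p =
                factEval u v x y τ q →
              Relation.EqvGen (factRel u v b c) p q))) ∧
      (∀ {B C D : Type u} [Category.{v} B] [Category.{v} C] [Category.{v} D]
          (x : B ⥤ D) (y : C ⥤ D),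
          IsExactSq (Comma.fst x y) (Comma.snd x y) x y (Comma.natTrans x y)) := by
  
  constructor
  · intro A B C D _ _ _ _ u v x y τ
    constructor
    · intro h
      refine ⟨fun b c ρ => ?_, fun b c p q hpq => ?_⟩
      · obtain ⟨z, hz⟩ := (h b c).2 ρ
        obtain ⟨p, rfl⟩ := z.exists_rep
        exact ⟨p, hz⟩
      · exact Quot.eq.mp ((h b c).1 (a₁ := Quot.mk _ p) (a₂ := Quot.mk _ q) hpq)
    · rintro ⟨hsurj, hinj⟩ b c
      constructor
      · intro z w h
        obtain ⟨p, rfl⟩ := z.exists_rep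
        obtain ⟨q, rfl⟩ := w.exists_rep
        exact Quot.eq.mpr (hinj b c p q h)
      · intro ρ
        obtain ⟨p, hp⟩ := hsurj b c ρ
        exact ⟨Quot.mk _ p, hp⟩
  · intro B C D _ _ _ x y b c
    have key : ∀ p : Σ a : Comma x y,
        (b ⟶ (Comma.fst x y).obj a) × ((Comma.snd x y).obj a ⟶ c),
        Relation.EqvGen (factRel (Comma.fst x y) (Comma.snd x y) b c) p
          ⟨⟨b, c, factEval _ _ x y (Comma.natTrans x y) p⟩, 𝟙 b, 𝟙 c⟩ := by
      rintro ⟨a, ψ, φ⟩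
      set ρ := factEval (Comma.fst x y) (Comma.snd x y) x y (Comma.natTrans x y)
        ⟨a, ψ, φ⟩ with hρ
      have hρ' : ρ = x.map ψ ≫ a.hom ≫ y.map φ := by
        simp [hρ, factEval, Comma.natTrans]
      let a' : Comma x y := ⟨b, a.right, x.map ψ ≫ a.hom⟩
      let m1 : a' ⟶ a := ⟨ψ, 𝟙 _, by simp [a']⟩
      let m2 : a' ⟶ (⟨b, c, ρ⟩ : Comma x y) := ⟨𝟙 _, φ, by simp [a', hρ']⟩
      have h1 : factRel (Comma.fst x y) (Comma.snd x y) b c ⟨a', 𝟙 b, φ⟩ ⟨a, ψ, φ⟩ :=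
        ⟨m1, by simp [m1, Comma.fst, Comma.snd]⟩
      have h2 : factRel (Comma.fst x y) (Comma.snd x y) b c ⟨a', 𝟙 b, φ⟩
          ⟨⟨b, c, ρ⟩, 𝟙 b, 𝟙 c⟩ :=
        ⟨m2, by simp [m2, Comma.fst, Comma.snd]⟩
      exact .trans _ _ _ (.symm _ _ (.rel _ _ h1)) (.rel _ _ h2)
    constructor
    · intro z w h
      obtain ⟨p, rfl⟩ := z.exists_rep
      obtain ⟨q, rfl⟩ := w.exists_rep
      have h' : factEval _ _ x y (Comma.natTrans x y) p
          = factEval _ _ x y (Comma.natTrans x y) q := h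
      refine Quot.eq.mpr ((key p).trans _ _ _ ?_)
      rw [h']
      exact (key q).symm _ _
    · intro ρ
      exact ⟨Quot.mk _ ⟨⟨b, c, ρ⟩, 𝟙 b, 𝟙 c⟩, by simp [factEval, Comma.natTrans]; exact (congrArg (ρ ≫ ·) (y.map_id c)).trans (Category.comp_id ρ)⟩
end
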